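/- Assuming 𝔭 = 𝔠, if an ideal I on ℕ has no basis of cardinality less than 𝔭, then I fails property (□): there exists a complete metric space X (one may take X = ℝ) and a monotone family {X_A : A ∈ I} of meager subsets of X (X_A ⊆ X_B whenever A ⊆ B) whose union is all of X. -/

import Mathlib

open scoped ENNReal Cardinal

/-- An ideal on ℕ containing all finite sets, closed under subsets and finite
unions, with `ℕ ∉ I`. -/
def IsIdealOn (I : Set (Set ℕ)) : Prop :=
  Set.univ ∉ I ∧ (∀ A ∈ I, ∀ B, B ⊆ A → B ∈ I) ∧
    (∀ A ∈ I, ∀ B ∈ I, A ∪ B ∈ I) ∧ (∀ A : Set ℕ, A.Finite → A ∈ I)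

/-- `β` is a basis of the ideal `I`: a cofinal (under inclusion) subfamily. -/
def IsIdealBasis (I β : Set (Set ℕ)) : Prop := β ⊆ I ∧ ∀ A ∈ I, ∃ B ∈ β, A ⊆ B

/-- `I` is a Baire ideal for the topological space `X`: for every monotone family of
nowhere dense subsets of `X` indexed by `I`, the union is not all of `X`. -/
def IsBaireIdealFor (I : Set (Set ℕ)) (X : Type*) [TopologicalSpace X] : Prop :=
  ∀ f : Set ℕ → Set X, (∀ A ∈ I, IsNowhereDense (f A)) →
    (∀ A ∈ I, ∀ B ∈ I, A ⊆ B → f A ⊆ f B) → (⋃ A ∈ I, f A) ≠ Set.univ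

/-- The pseudointersection number 𝔭: the least cardinality of a family of subsets of ℕ
with the strong finite intersection property but no infinite pseudointersection. -/
noncomputable def pseudoNum : Cardinal :=
  sInf {c : Cardinal | ∃ 𝒜 : Set (Set ℕ), Cardinal.mk 𝒜 = c ∧
    (∀ F : Finset (Set ℕ), ↑F ⊆ 𝒜 → (⋂ A ∈ F, A).Infinite) ∧
    ¬ ∃ B : Set ℕ, B.Infinite ∧ ∀ A ∈ 𝒜, (B \ A).Finite}

set_option linter.unusedVariables false

namespace PseudoAux
open Set

noncomputable def ee : ℕ → ℚ × ℚ := fun n => (Denumerable.eqv (ℚ × ℚ)).symm n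
lemma ee_surj : Function.Surjective ee := (Denumerable.eqv (ℚ × ℚ)).symm.surjective
noncomputable def gg : List (ℚ × ℚ) ≃ ℕ := Denumerable.eqv _

def Good (s : List (ℚ × ℚ)) : Prop :=
  ∀ k (hk : k < s.length), (s.get ⟨k, hk⟩).1 < (s.get ⟨k, hk⟩).2 ∧
    ((ee k).1 < (ee k).2 →
      Set.Icc ((s.get ⟨k, hk⟩).1 : ℝ) ((s.get ⟨k, hk⟩).2 : ℝ) ⊆
        Set.Ioo ((ee k).1 : ℝ) ((ee k).2 : ℝ))

def Avoid (x : ℝ) (s : List (ℚ × ℚ)) : Prop :=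
  ∀ k (hk : k < s.length),
    x ∉ Set.Icc ((s.get ⟨k, hk⟩).1 : ℝ) ((s.get ⟨k, hk⟩).2 : ℝ)

lemma interval_avoid (p q : ℚ) (hpq : p < q) (T : Finset ℝ) :
    ∃ a b : ℚ, a < b ∧ Set.Icc (a : ℝ) b ⊆ Set.Ioo (p : ℝ) q ∧
      ∀ x ∈ T, x ∉ Set.Icc (a : ℝ) b := by
  have hpq' : (p : ℝ) < q := by exact_mod_cast hpq
  set O : Set ℝ := Set.Ioo (p : ℝ) q \ (T : Set ℝ) with hO
  have hOopen : IsOpen O := isOpen_Ioo.sdiff (T.finite_toSet.isClosed)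
  have hOne : O.Nonempty := ((Set.Ioo_infinite hpq').diff T.finite_toSet).nonempty
  obtain ⟨y, hy⟩ := hOne
  obtain ⟨ε, hε, hball⟩ := Metric.isOpen_iff.mp hOopen y hy
  obtain ⟨a, ha1, ha2⟩ := exists_rat_btwn (show y - ε < y by linarith)
  obtain ⟨b, hb1, hb2⟩ := exists_rat_btwn (show y < y + ε by linarith)
  have hab : (a : ℝ) < b := lt_trans ha2 hb1
  have hsub : Set.Icc (a : ℝ) b ⊆ O := by
    intro x hx
    apply hball
    rw [Real.ball_eq_Ioo]
    exact ⟨lt_of_lt_of_le ha1 hx.1, lt_of_le_of_lt hx.2 hb2⟩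
  refine ⟨a, b, by exact_mod_cast hab, fun x hx => (hsub hx).1, fun x hx hmem => ?_⟩
  exact (hsub hmem).2 hx

lemma good_seq (T : Finset ℝ) (n : ℕ) :
    ∃ s : List (ℚ × ℚ), s.length = n ∧ Good s ∧ ∀ x ∈ T, Avoid x s := by
  have hc : ∀ k : ℕ, ∃ ab : ℚ × ℚ, ab.1 < ab.2 ∧
      ((ee k).1 < (ee k).2 →
        Set.Icc (ab.1 : ℝ) ab.2 ⊆ Set.Ioo ((ee k).1 : ℝ) ((ee k).2 : ℝ)) ∧
      ∀ x ∈ T, x ∉ Set.Icc (ab.1 : ℝ) (ab.2 : ℝ) := by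
    intro k
    by_cases h : (ee k).1 < (ee k).2
    · obtain ⟨a, b, h1, h2, h3⟩ := interval_avoid (ee k).1 (ee k).2 h T
      exact ⟨(a, b), h1, fun _ => h2, h3⟩
    · obtain ⟨a, b, h1, _, h3⟩ := interval_avoid 0 1 one_pos T
      exact ⟨(a, b), h1, fun hh => absurd hh h, h3⟩
  choose c hc1 hc2 hc3 using hc
  refine ⟨List.ofFn (fun i : Fin n => c i), List.length_ofFn, ?_, ?_⟩
  · intro k hk
    have : (List.ofFn (fun i : Fin n => c i)).get ⟨k, hk⟩ = c k := by
      simp [List.get_ofFn]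
    rw [this]
    exact ⟨hc1 k, hc2 k⟩
  · intro x hx k hk
    have : (List.ofFn (fun i : Fin n => c i)).get ⟨k, hk⟩ = c k := by
      simp [List.get_ofFn]
    rw [this]
    exact hc3 k x hx

lemma exists_pi (𝒜 : Set (Set ℕ)) (h : Cardinal.mk 𝒜 < pseudoNum)
    (hsfip : ∀ F : Finset (Set ℕ), ↑F ⊆ 𝒜 → (⋂ A ∈ F, A).Infinite) :
    ∃ B : Set ℕ, B.Infinite ∧ ∀ A ∈ 𝒜, (B \ A).Finite := by
  by_contra hno
  have hmem : Cardinal.mk 𝒜 ∈ {c : Cardinal | ∃ 𝒜 : Set (Set ℕ), Cardinal.mk 𝒜 = c ∧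
      (∀ F : Finset (Set ℕ), ↑F ⊆ 𝒜 → (⋂ A ∈ F, A).Infinite) ∧
      ¬ ∃ B : Set ℕ, B.Infinite ∧ ∀ A ∈ 𝒜, (B \ A).Finite} := ⟨𝒜, rfl, hsfip, hno⟩
  exact absurd (csInf_le' hmem) (not_le.mpr h)

lemma small_meagre (hp : (Cardinal.aleph0 : Cardinal) < pseudoNum)
    (S : Set ℝ) (hS : Cardinal.mk S < pseudoNum) : IsMeagre S := by
  classical
  -- the families
  set AA : ℝ → Set (List (ℚ × ℚ)) := fun x => {s | Good s ∧ Avoid x s} with hAA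
  set FF : ℕ → Set (List (ℚ × ℚ)) := fun n => {s | Good s ∧ n ≤ s.length} with hFF
  set 𝒜 : Set (Set ℕ) :=
    ((fun x => gg '' AA x) '' S) ∪ Set.range (fun n => gg '' FF n) with h𝒜
  -- cardinality
  have hcard : Cardinal.mk 𝒜 < pseudoNum := by
    have h1 : Cardinal.mk 𝒜 ≤ Cardinal.mk S + Cardinal.aleph0 :=
      (Cardinal.mk_union_le _ _).trans
        (add_le_add Cardinal.mk_image_le (Cardinal.mk_nat ▸ Cardinal.mk_range_le))
    exact lt_of_le_of_lt h1 (Cardinal.add_lt_of_lt hp.le hS hp)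
  -- SFIP
  have key : ∀ F : Finset (Set ℕ), ↑F ⊆ 𝒜 → ∃ (T : Finset ℝ) (n₀ : ℕ),
      ∀ A ∈ F, ∀ s : List (ℚ × ℚ), Good s → (∀ x ∈ T, Avoid x s) →
        n₀ ≤ s.length → gg s ∈ A := by
    intro F
    induction F using Finset.cons_induction with
    | empty => exact fun _ => ⟨∅, 0, by simp⟩
    | cons A F hA ih =>
      intro hsub
      have hsub' : ↑F ⊆ 𝒜 := by
        refine subset_trans ?_ hsub
        intro B hB; simp [Finset.mem_cons] at hB ⊢; tauto
      obtain ⟨T, n₀, hTn⟩ := ih hsub'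
      have hAmem : A ∈ 𝒜 := hsub (by simp)
      rcases hAmem with ⟨x, hxS, rfl⟩ | ⟨n, rfl⟩
      · refine ⟨insert x T, n₀, ?_⟩
        intro B hB s hs hav hlen
        rcases Finset.mem_cons.mp hB with rfl | hB
        · exact ⟨s, ⟨hs, hav x (Finset.mem_insert_self _ _)⟩, rfl⟩
        · exact hTn B hB s hs (fun y hy => hav y (Finset.mem_insert_of_mem hy)) hlen
      · refine ⟨T, max n₀ n, ?_⟩
        intro B hB s hs hav hlen
        rcases Finset.mem_cons.mp hB with rfl | hB
        · exact ⟨s, ⟨hs, le_trans (le_max_right _ _) hlen⟩, rfl⟩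
        · exact hTn B hB s hs hav (le_trans (le_max_left _ _) hlen)
  have hsfip : ∀ F : Finset (Set ℕ), ↑F ⊆ 𝒜 → (⋂ A ∈ F, A).Infinite := by
    intro F hF
    obtain ⟨T, n₀, hTn⟩ := key F hF
    choose s hs1 hs2 hs3 using fun n => good_seq T n
    apply Set.infinite_of_injective_forall_mem
      (f := fun n : ℕ => gg (s (n₀ + n)))
    · intro a b hab
      have := gg.injective hab
      have : n₀ + a = n₀ + b := by rw [← hs1 (n₀ + a), ← hs1 (n₀ + b), this]
      omega
    · intro n
      refine Set.mem_iInter₂.mpr fun A hA => ?_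
      exact hTn A hA _ (hs2 _) (hs3 _) (by rw [hs1]; omega)
  obtain ⟨B, hBinf, hB⟩ := exists_pi 𝒜 hcard hsfip
  -- pull back
  set B' : Set (List (ℚ × ℚ)) := gg ⁻¹' B with hB'def
  have hB'inf : B'.Infinite := by
    intro hfin
    have : B = gg '' B' := by
      rw [hB'def, Set.image_preimage_eq _ gg.surjective]
    exact hBinf (this ▸ hfin.image gg)
  have hpull : ∀ X : Set (List (ℚ × ℚ)), gg '' X ∈ 𝒜 → (B' \ X).Finite := by
    intro X hX
    have h1 : B' \ X ⊆ gg ⁻¹' (B \ gg '' X) := by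
      intro t ⟨ht1, ht2⟩
      exact ⟨ht1, fun ⟨u, hu1, hu2⟩ => ht2 (gg.injective hu2 ▸ hu1)⟩
    have h2 : (gg ⁻¹' (B \ gg '' X)).Finite :=
      (hB _ hX).preimage (gg.injective.injOn)
    exact h2.subset h1
  have hBA : ∀ x ∈ S, (B' \ AA x).Finite := fun x hx =>
    hpull _ (Set.mem_union_left _ ⟨x, hx, rfl⟩)
  have hBF : ∀ n, (B' \ FF n).Finite := fun n =>
    hpull _ (Set.mem_union_right _ ⟨n, rfl⟩)
  -- the dense open sets
  set U : Finset (List (ℚ × ℚ)) → Set ℝ := fun t =>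
    ⋃ (s : List (ℚ × ℚ)) (_ : s ∈ B' ∧ s ∉ t ∧ Good s) (k : Fin s.length),
      Set.Ioo ((s.get k).1 : ℝ) ((s.get k).2 : ℝ) with hU
  have hUopen : ∀ t, IsOpen (U t) := fun t =>
    isOpen_iUnion fun s => isOpen_iUnion fun _ => isOpen_iUnion fun k => isOpen_Ioo
  have hUdense : ∀ t, Dense (U t) := by
    intro t
    rw [dense_iff_inter_open]
    intro O hO ⟨y, hy⟩
    obtain ⟨ε, hε, hball⟩ := Metric.isOpen_iff.mp hO y hy
    obtain ⟨p, hp1, hp2⟩ := exists_rat_btwn (show y - ε < y by linarith)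
    obtain ⟨q, hq1, hq2⟩ := exists_rat_btwn (show y < y + ε by linarith)
    have hpq : p < q := by exact_mod_cast lt_trans hp2 hq1
    obtain ⟨k, hk⟩ := ee_surj (p, q)
    -- find a suitable s
    have : (B' \ (↑t ∪ (B' \ FF (k + 1)))).Nonempty :=
      (hB'inf.diff (t.finite_toSet.union (hBF (k + 1)))).nonempty
    obtain ⟨s, hsB', hsrest⟩ := this
    rw [Set.mem_union, not_or] at hsrest
    obtain ⟨hst, hsFF⟩ := hsrest
    have hsFF' : s ∈ FF (k + 1) := by
      by_contra h; exact hsFF ⟨hsB', h⟩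
    obtain ⟨hGood, hlen⟩ := hsFF'
    have hklen : k < s.length := hlen
    obtain ⟨hlt, hcont⟩ := hGood k hklen
    have heelt : (ee k).1 < (ee k).2 := by rw [hk]; exact hpq
    have hsubO : Set.Icc ((s.get ⟨k, hklen⟩).1 : ℝ) ((s.get ⟨k, hklen⟩).2 : ℝ) ⊆ O := by
      refine subset_trans (hcont heelt) ?_
      rw [hk]
      intro z hz
      apply hball
      rw [Real.ball_eq_Ioo]
      exact ⟨lt_trans hp1 hz.1, lt_trans hz.2 hq2⟩
    have hlt' : ((s.get ⟨k, hklen⟩).1 : ℝ) < ((s.get ⟨k, hklen⟩).2 : ℝ) := by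
      exact_mod_cast hlt
    obtain ⟨z, hz⟩ := Set.nonempty_Ioo.mpr hlt'
    refine ⟨z, hsubO (Set.Ioo_subset_Icc_self hz), ?_⟩
    exact Set.mem_iUnion.mpr ⟨s, Set.mem_iUnion.mpr ⟨⟨hsB', fun h => hst h, hGood⟩,
      Set.mem_iUnion.mpr ⟨⟨k, hklen⟩, hz⟩⟩⟩
  -- the residual set
  have hres : (⋂ t : Finset (List (ℚ × ℚ)), U t) ∈ residual ℝ :=
    countable_iInter_mem.mpr fun t => residual_of_dense_open (hUopen t) (hUdense t)
  rw [IsMeagre]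
  refine Filter.mem_of_superset hres ?_
  intro x hx hxS
  have hxI := Set.mem_iInter.mp hx ((hBA x hxS).toFinset)
  obtain ⟨s, hmem⟩ := Set.mem_iUnion.mp hxI
  obtain ⟨⟨hsB', hst, hGood⟩, hmem2⟩ := Set.mem_iUnion.mp hmem
  obtain ⟨k, hk⟩ := Set.mem_iUnion.mp hmem2
  have hsAA : s ∈ AA x := by
    by_contra h
    exact hst ((hBA x hxS).mem_toFinset.mpr ⟨hsB', h⟩)
  exact hsAA.2 k.1 k.2 (Set.Ioo_subset_Icc_self hk)

lemma subset_continuum (X : Set (Set ℕ)) : Cardinal.mk X ≤ Cardinal.continuum := by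
  calc Cardinal.mk X ≤ Cardinal.mk (Set ℕ) := Cardinal.mk_set_le X
  _ = Cardinal.continuum := by
      rw [Cardinal.mk_set, Cardinal.mk_nat, Cardinal.two_power_aleph0]

end PseudoAux

/-- Under 𝔭 = 𝔠, an ideal with no basis of cardinality `< 𝔭` fails property (□),
witnessed by `X = ℝ`. -/
theorem stmt_1 (hpc : pseudoNum = Cardinal.continuum)
    (I : Set (Set ℕ)) (hI : IsIdealOn I)
    (hnb : ∀ β : Set (Set ℕ), IsIdealBasis I β → ¬ Cardinal.mk β < pseudoNum) :
    ∃ f : Set ℕ → Set ℝ, (∀ A ∈ I, IsMeagre (f A)) ∧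
      (∀ A ∈ I, ∀ B ∈ I, A ⊆ B → f A ⊆ f B) ∧ (⋃ A ∈ I, f A) = Set.univ := by
  classical
  have hp : Cardinal.aleph0 < pseudoNum := by
    rw [hpc]; exact Cardinal.aleph0_lt_continuum
  -- #I = continuum
  have hIle : Cardinal.mk I ≤ Cardinal.continuum := PseudoAux.subset_continuum I
  have hIge : Cardinal.continuum ≤ Cardinal.mk I := by
    have hbasis : IsIdealBasis I I := ⟨subset_rfl, fun A hA => ⟨A, hA, subset_rfl⟩⟩
    have := not_lt.mp (hnb I hbasis)
    rwa [hpc] at this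
  have hIeq : Cardinal.mk I = Cardinal.continuum := le_antisymm hIle hIge
  have hcardeq : Cardinal.mk ℝ = Cardinal.mk I := by
    rw [Cardinal.mk_real, hIeq]
  obtain ⟨e⟩ := Cardinal.eq.mp hcardeq
  obtain ⟨r, wo, hord⟩ := Cardinal.ord_eq ↥I
  haveI := wo
  -- initial segments are small
  have hseg : ∀ j : ↥I, Cardinal.mk {i : ↥I | r i j} < Cardinal.continuum := by
    intro j
    have h1 : Ordinal.typein r j < Ordinal.type r := Ordinal.typein_lt_type r j
    rw [← hord] at h1
    have h2 := Cardinal.lt_ord.mp h1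
    rw [Ordinal.card_typein] at h2
    rw [← hIeq]
    exact h2
  -- choose witnesses
  have hchoice : ∀ j : ↥I, ∃ C ∈ I, ∀ i : ↥I, r i j → ¬ C ⊆ ↑i := by
    intro j
    by_contra h
    push_neg at h
    set β : Set (Set ℕ) := (fun i : ↥I => (i : Set ℕ)) '' {i | r i j} with hβ
    have hbasis : IsIdealBasis I β := by
      constructor
      · rintro B ⟨i, _, rfl⟩; exact i.2
      · intro C hC
        obtain ⟨i, hri, hsub⟩ := h C hC
        exact ⟨↑i, ⟨i, hri, rfl⟩, hsub⟩
    refine hnb β hbasis ?_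
    rw [hpc]
    exact lt_of_le_of_lt Cardinal.mk_image_le (hseg j)
  choose A hAI hAnot using hchoice
  refine ⟨fun S => {x : ℝ | (A (e x) : Set ℕ) ⊆ S}, ?_, ?_, ?_⟩
  · -- meagre
    intro S hS
    set j : ↥I := ⟨S, hS⟩ with hj
    have hsub : {x : ℝ | (A (e x) : Set ℕ) ⊆ S} ⊆ ⇑e ⁻¹' ({i : ↥I | r i j} ∪ {j}) := by
      intro x hx
      have hnr : ¬ r j (e x) := fun hr => hAnot (e x) j hr hx
      rcases trichotomous_of r (e x) j with h | h | h
      · exact Or.inl h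
      · exact Or.inr (by simp [h])
      · exact absurd h hnr
    apply PseudoAux.small_meagre hp
    calc Cardinal.mk {x : ℝ | (A (e x) : Set ℕ) ⊆ S}
        ≤ Cardinal.mk (⇑e ⁻¹' ({i : ↥I | r i j} ∪ {j})) :=
          Cardinal.mk_le_mk_of_subset hsub
      _ ≤ Cardinal.mk (({i : ↥I | r i j} ∪ {j} : Set ↥I)) :=
          Cardinal.mk_preimage_of_injective _ _ e.injective
      _ ≤ Cardinal.mk {i : ↥I | r i j} + Cardinal.mk ({j} : Set ↥I) :=
          Cardinal.mk_union_le _ _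
      _ < Cardinal.continuum := by
          rw [Cardinal.mk_singleton]
          exact Cardinal.add_lt_of_lt Cardinal.aleph0_le_continuum (hseg j)
            (lt_of_lt_of_le Cardinal.one_lt_aleph0 Cardinal.aleph0_le_continuum)
      _ = pseudoNum := hpc.symm
  · -- monotone
    intro S hS T hT hST x hx
    exact subset_trans hx hST
  · -- union
    ext x
    simp only [Set.mem_iUnion, Set.mem_univ, iff_true]
    exact ⟨A (e x), hAI (e x), by simp [Set.mem_setOf_eq]⟩
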